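/- The number of partitions of n into parts that pairwise differ by at least 2 and have exactly m parts equals the coefficient of z^m q^n in ∑_{N ≥ 0} q^{N²} z^N / ((1−q)(1−q²)···(1−q^N)). -/

import Mathlib

open PowerSeries

/-- Parts of the partition pairwise differ by at least 2. -/
def PairwiseGapTwo {n : ℕ} (p : n.Partition) : Prop :=
  p.parts.Nodup ∧ ∀ a ∈ p.parts, ∀ b ∈ p.parts, a ≠ b → 2 ≤ max a b - min a b

namespace RRaux

/-- The `i`-th part (increasing order) of the gap-2 partition encoded by gaps `e`. -/
def aFun (m : ℕ) (e : Fin m → ℕ) (i : Fin m) : ℕ :=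
  2 * (i : ℕ) + 1 + ∑ k ∈ Finset.Iic i, e k

lemma Iic_of_val_zero {m : ℕ} (i : Fin m) (hi : (i : ℕ) = 0) :
    Finset.Iic i = {i} := by
  ext k
  simp only [Finset.mem_Iic, Finset.mem_singleton, Fin.le_def, Fin.ext_iff]
  omega

lemma Iio_eq_Iic {m : ℕ} (i i' : Fin m) (h : (i' : ℕ) + 1 = (i : ℕ)) :
    Finset.Iio i = Finset.Iic i' := by
  ext k
  simp only [Finset.mem_Iio, Finset.mem_Iic, Fin.lt_def, Fin.le_def]
  omega

lemma sum_Iic_ext {m : ℕ} (f g : Fin m → ℕ)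
    (h : ∀ i : Fin m, ∑ k ∈ Finset.Iic i, f k = ∑ k ∈ Finset.Iic i, g k) : f = g := by
  have H : ∀ N : ℕ, ∀ i : Fin m, (i : ℕ) < N → f i = g i := by
    intro N
    induction N with
    | zero => intro i hi; omega
    | succ N ih =>
      intro i hi
      have hIio : ∑ k ∈ Finset.Iio i, f k = ∑ k ∈ Finset.Iio i, g k := by
        refine Finset.sum_congr rfl fun k hk => ?_
        have hk' : (k : ℕ) < (i : ℕ) := Fin.lt_def.mp (Finset.mem_Iio.mp hk)
        exact ih k (by omega)
      have hins := h i
      rw [← Finset.Iio_insert i, Finset.sum_insert (by simp),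
        Finset.sum_insert (by simp), hIio] at hins
      omega
  exact funext fun i => H m i i.isLt

lemma aFun_gap {m : ℕ} (e : Fin m → ℕ) {i j : Fin m} (hij : i < j) :
    aFun m e i + 2 ≤ aFun m e j := by
  unfold aFun
  have h1 : ∑ k ∈ Finset.Iic i, e k ≤ ∑ k ∈ Finset.Iic j, e k :=
    Finset.sum_le_sum_of_subset (Finset.Iic_subset_Iic.mpr hij.le)
  have h2 : (i : ℕ) < (j : ℕ) := hij
  omega

lemma aFun_strictMono {m : ℕ} (e : Fin m → ℕ) : StrictMono (aFun m e) := by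
  intro i j hij
  have := aFun_gap e hij
  omega

lemma sum_range_odd (m : ℕ) : ∑ i ∈ Finset.range m, (2 * i + 1) = m ^ 2 := by
  induction m with
  | zero => simp
  | succ m ih => rw [Finset.sum_range_succ, ih]; ring

lemma sum_aFun {m : ℕ} (e : Fin m → ℕ) :
    ∑ i, aFun m e i = m ^ 2 + ∑ k : Fin m, (m - (k : ℕ)) * e k := by
  unfold aFun
  rw [Finset.sum_add_distrib]
  congr 1
  · rw [Fin.sum_univ_eq_sum_range (fun i => 2 * i + 1)]
    exact sum_range_odd m
  · have h1 : ∀ i : Fin m, ∑ k ∈ Finset.Iic i, e k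
        = ∑ k : Fin m, if k ≤ i then e k else 0 := by
      intro i
      rw [← Finset.sum_filter]
      congr 1
      ext k; simp
    simp_rw [h1]
    rw [Finset.sum_comm]
    refine Finset.sum_congr rfl fun k _ => ?_
    have h2 : ∑ i : Fin m, (if k ≤ i then e k else 0)
        = (Finset.Ici k).card * e k := by
      rw [← Finset.sum_filter]
      have : Finset.filter (fun i => k ≤ i) Finset.univ = Finset.Ici k := by
        ext i; simp
      rw [this, Finset.sum_const, smul_eq_mul]
    rw [h2, Fin.card_Ici]

/-- The gap-2 partition associated to the gap sequence `e`. -/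
def toPart {m n : ℕ} (e : Fin m → ℕ)
    (he : m ^ 2 + ∑ k : Fin m, (m - (k : ℕ)) * e k = n) : n.Partition where
  parts := (List.ofFn (aFun m e) : Multiset ℕ)
  parts_pos := by
    intro i hi
    rw [Multiset.mem_coe, List.mem_ofFn] at hi
    obtain ⟨j, rfl⟩ := hi
    unfold aFun
    omega
  parts_sum := by
    rw [Multiset.sum_coe, List.sum_ofFn, sum_aFun, he]

lemma toPart_gap2 {m n : ℕ} (e : Fin m → ℕ)
    (he : m ^ 2 + ∑ k : Fin m, (m - (k : ℕ)) * e k = n) :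
    PairwiseGapTwo (toPart e he) ∧ Multiset.card (toPart e he).parts = m := by
  have hmem : ∀ x ∈ (toPart e he).parts, ∃ i, aFun m e i = x := by
    intro x hx
    rwa [toPart, Multiset.mem_coe, List.mem_ofFn] at hx
  refine ⟨⟨?_, ?_⟩, ?_⟩
  · rw [toPart, Multiset.coe_nodup, List.nodup_ofFn]
    exact (aFun_strictMono e).injective
  · intro a ha b hb hab
    obtain ⟨i, rfl⟩ := hmem a ha
    obtain ⟨j, rfl⟩ := hmem b hb
    have hij : i ≠ j := fun h => hab (by rw [h])
    rcases hij.lt_or_gt with h | h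
    · have := aFun_gap e h
      have h2 := aFun_strictMono e h
      rw [max_eq_right h2.le, min_eq_left h2.le]
      omega
    · have := aFun_gap e h
      have h2 := aFun_strictMono e h
      rw [max_eq_left h2.le, min_eq_right h2.le]
      omega
  · rw [toPart, Multiset.coe_card, List.length_ofFn]

lemma toPart_bijective (m n : ℕ) :
    Function.Bijective
      (fun e : {e : Fin m → ℕ // m ^ 2 + ∑ k : Fin m, (m - (k : ℕ)) * e k = n} =>
        (⟨toPart e.1 e.2, toPart_gap2 e.1 e.2⟩ :
          {p : n.Partition // PairwiseGapTwo p ∧ Multiset.card p.parts = m})) := by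
  constructor
  · rintro ⟨e, he⟩ ⟨e', he'⟩ h
    have hparts : (List.ofFn (aFun m e) : Multiset ℕ)
        = (List.ofFn (aFun m e') : Multiset ℕ) := by
      have := congrArg (fun p => p.1.parts) h
      simpa [toPart] using this
    rw [Multiset.coe_eq_coe] at hparts
    have hsorted : (List.ofFn (aFun m e)).Pairwise (· < ·) :=
      List.pairwise_ofFn.mpr (aFun_strictMono e)
    have hsorted' : (List.ofFn (aFun m e')).Pairwise (· < ·) :=
      List.pairwise_ofFn.mpr (aFun_strictMono e')
    have hlist := List.Perm.eq_of_pairwise' (hsorted.imp le_of_lt) (hsorted'.imp le_of_lt) hparts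
    have hfun : aFun m e = aFun m e' := List.ofFn_injective hlist
    have : e = e' := by
      apply sum_Iic_ext
      intro i
      have := congrFun hfun i
      unfold aFun at this
      omega
    exact Subtype.ext this
  · rintro ⟨p, ⟨hnd, hgap⟩, hcard⟩
    set L := Multiset.sort p.parts (· ≤ ·) with hL
    have hLsort : L.Pairwise (· ≤ ·) := Multiset.pairwise_sort _ _
    have hLnd : L.Nodup := by
      rw [← Multiset.coe_nodup, hL, Multiset.sort_eq]; exact hnd
    have hlen : L.length = m := by
      rw [hL, Multiset.length_sort, hcard]
    have hLlt : L.Pairwise (· < ·) := by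
      have := hLsort.and hLnd
      exact this.imp fun h => lt_of_le_of_ne h.1 h.2
    -- b i = i-th element of L
    set b : ℕ → ℕ := fun i => L.getD i 0 with hb
    have hbget : ∀ i : ℕ, i < m → ∀ h : i < L.length, b i = L.get ⟨i, h⟩ := by
      intro i _ h
      rw [hb]; exact List.getD_eq_getElem _ _ h
    have hbmem : ∀ i : ℕ, i < m → b i ∈ p.parts := by
      intro i hi
      have h : i < L.length := by omega
      rw [hbget i hi h, ← Multiset.mem_sort (r := (· ≤ ·)), ← hL]
      exact List.get_mem L ⟨i, h⟩
    have hblt : ∀ i j : ℕ, i < j → j < m → b i < b j := by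
      intro i j hij hj
      have h1 : i < L.length := by omega
      have h2 : j < L.length := by omega
      rw [hbget i (by omega) h1, hbget j hj h2]
      exact hLlt.sortedLT.strictMono_get (show (⟨i, h1⟩ : Fin L.length) < ⟨j, h2⟩ from hij)
    have hbgap : ∀ i : ℕ, i + 1 < m → b i + 2 ≤ b (i + 1) := by
      intro i hi
      have hlt := hblt i (i + 1) (by omega) hi
      have hne : b i ≠ b (i + 1) := hlt.ne
      have := hgap (b i) (hbmem i (by omega)) (b (i + 1)) (hbmem (i + 1) hi) hne
      rw [max_eq_right hlt.le, min_eq_left hlt.le] at this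
      omega
    have hb0 : 0 < m → 1 ≤ b 0 := fun h => p.parts_pos (hbmem 0 h)
    -- the gap sequence
    set e : Fin m → ℕ := fun i =>
      if (i : ℕ) = 0 then b 0 - 1 else b i - b ((i : ℕ) - 1) - 2 with he
    have key : ∀ N : ℕ, ∀ i : Fin m, (i : ℕ) < N → aFun m e i = b i := by
      intro N
      induction N with
      | zero => intro i hi; omega
      | succ N ih =>
        intro i hi
        rcases Nat.eq_zero_or_pos (i : ℕ) with h0 | h0
        · have hei : e i = b 0 - 1 := by
            show (if (i : ℕ) = 0 then b 0 - 1 else b (i : ℕ) - b ((i : ℕ) - 1) - 2) = _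
            rw [if_pos h0]
          have hm : 0 < m := lt_of_le_of_lt (Nat.zero_le _) i.isLt
          have hb1 := hb0 hm
          rw [aFun, Iic_of_val_zero i h0, Finset.sum_singleton, hei, h0]
          omega
        · set i' : Fin m := ⟨(i : ℕ) - 1, by omega⟩ with hi'
          have hIio : Finset.Iio i = Finset.Iic i' := Iio_eq_Iic i i'
            (by show (i : ℕ) - 1 + 1 = (i : ℕ); omega)
          have hstep : aFun m e i = aFun m e i' + 2 + e i := by
            rw [aFun, aFun, ← Finset.Iio_insert i, Finset.sum_insert (by simp), hIio]
            simp only [hi']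
            omega
          have hIH : aFun m e i' = b ((i : ℕ) - 1) := by
            have := ih i' (show (i : ℕ) - 1 < N by omega)
            rwa [show ((i' : ℕ)) = (i : ℕ) - 1 from rfl] at this
          have hgap' : b ((i : ℕ) - 1) + 2 ≤ b (i : ℕ) := by
            have := hbgap ((i : ℕ) - 1) (by omega)
            rwa [show (i : ℕ) - 1 + 1 = (i : ℕ) by omega] at this
          have hei : e i = b (i : ℕ) - b ((i : ℕ) - 1) - 2 := by
            show (if (i : ℕ) = 0 then b 0 - 1 else b (i : ℕ) - b ((i : ℕ) - 1) - 2) = _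
            rw [if_neg (by omega)]
          rw [hstep, hIH, hei]
          omega
    have hae : ∀ i : Fin m, aFun m e i = b i := fun i => key m i i.isLt
    have hlist : List.ofFn (aFun m e) = L := by
      apply List.ext_get
      · rw [List.length_ofFn, hlen]
      · intro i h1 h2
        rw [List.get_ofFn]
        have hi : i < m := by rwa [List.length_ofFn] at h1
        rw [show (aFun m e (Fin.cast (by simp) ⟨i, h1⟩)) = aFun m e ⟨i, hi⟩ by
          congr 1]
        rw [hae ⟨i, hi⟩, hbget i hi h2]
    have hesum : m ^ 2 + ∑ k : Fin m, (m - (k : ℕ)) * e k = n := by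
      have h1 : ∑ i, aFun m e i = n := by
        have : (List.ofFn (aFun m e)).sum = L.sum := by rw [hlist]
        rw [List.sum_ofFn] at this
        rw [this]
        have : (L : Multiset ℕ).sum = p.parts.sum := by rw [hL, Multiset.sort_eq]
        rw [Multiset.sum_coe] at this
        rw [this, p.parts_sum]
      rw [← sum_aFun, h1]
    refine ⟨⟨e, hesum⟩, ?_⟩
    apply Subtype.ext
    apply Nat.Partition.ext
    show (List.ofFn (aFun m e) : Multiset ℕ) = p.parts
    rw [hlist, hL, Multiset.sort_eq]

/-- The generating function of multiples of `j`. -/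
noncomputable def gj (j : ℕ) : PowerSeries ℚ :=
  PowerSeries.mk fun d => if j ∣ d then 1 else 0

lemma gj_mul (j : ℕ) (hj : 0 < j) : gj j * (1 - X ^ j) = 1 := by
  ext n
  rw [mul_sub, mul_one, map_sub, PowerSeries.coeff_mul_X_pow']
  rw [gj, PowerSeries.coeff_mk]
  rcases Nat.eq_zero_or_pos n with rfl | hn
  · rw [if_pos (dvd_zero j), if_neg (show ¬ j ≤ 0 by omega)]
    simp
  · rw [PowerSeries.coeff_one, if_neg hn.ne']
    by_cases hd : j ∣ n
    · have hjn : j ≤ n := Nat.le_of_dvd hn hd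
      rw [if_pos hd, if_pos hjn, PowerSeries.coeff_mk,
        if_pos (Nat.dvd_sub hd dvd_rfl)]
      ring
    · rw [if_neg hd]
      by_cases hjn : j ≤ n
      · rw [if_pos hjn, PowerSeries.coeff_mk, if_neg]
        · ring
        · intro hc
          exact hd (by
            have := Nat.dvd_add hc (dvd_refl j)
            rwa [Nat.sub_add_cancel hjn] at this)
      · rw [if_neg hjn]; ring

lemma prod_inv_eq (m : ℕ) :
    (∏ j ∈ Finset.Icc 1 m, (1 - (X : PowerSeries ℚ) ^ j))⁻¹
      = ∏ j ∈ Finset.Icc 1 m, gj j := by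
  have hc : constantCoeff (∏ j ∈ Finset.Icc 1 m, (1 - (X : PowerSeries ℚ) ^ j)) ≠ 0 := by
    rw [map_prod]
    have : ∀ j ∈ Finset.Icc 1 m,
        constantCoeff (1 - (X : PowerSeries ℚ) ^ j) = 1 := by
      intro j hj
      have : 0 < j := (Finset.mem_Icc.mp hj).1
      rw [map_sub, map_one, map_pow, PowerSeries.constantCoeff_X,
        zero_pow this.ne', sub_zero]
    rw [Finset.prod_congr rfl this, Finset.prod_const_one]
    exact one_ne_zero
  symm
  rw [PowerSeries.eq_inv_iff_mul_eq_one hc]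
  rw [← Finset.prod_mul_distrib]
  rw [Finset.prod_congr rfl fun j hj => gj_mul j (Finset.mem_Icc.mp hj).1]
  exact Finset.prod_const_one

lemma coeff_prod_gj (m d : ℕ) :
    PowerSeries.coeff d (∏ j ∈ Finset.Icc 1 m, gj j)
      = ((Finset.finsuppAntidiag (Finset.Icc 1 m) d).filter
          (fun l : ℕ →₀ ℕ => ∀ j ∈ Finset.Icc 1 m, j ∣ l j)).card := by
  rw [PowerSeries.coeff_prod]
  have h1 : ∀ l ∈ Finset.finsuppAntidiag (Finset.Icc 1 m) d,
      ∏ i ∈ Finset.Icc 1 m, PowerSeries.coeff (l i) (gj i)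
        = if ∀ j ∈ Finset.Icc 1 m, j ∣ l j then (1 : ℚ) else 0 := by
    intro l _
    rw [← Finset.prod_boole]
    exact Finset.prod_congr rfl fun i _ => by rw [gj, PowerSeries.coeff_mk]
  rw [Finset.sum_congr rfl h1, Finset.sum_boole]

lemma sum_reindex (m : ℕ) (f : ℕ → ℕ) :
    ∑ k ∈ Finset.range m, f (m - k) = ∑ j ∈ Finset.Icc 1 m, f j := by
  refine Finset.sum_bij' (fun k _ => m - k) (fun j _ => m - j) ?_ ?_ ?_ ?_ ?_
  · intro a ha; rw [Finset.mem_range] at ha; simp only [Finset.mem_Icc]; omega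
  · intro a ha; rw [Finset.mem_Icc] at ha; simp only [Finset.mem_range]; omega
  · intro a ha; rw [Finset.mem_range] at ha; show m - (m - a) = a; omega
  · intro a ha; rw [Finset.mem_Icc] at ha; show m - (m - a) = a; omega
  · intro a ha; rfl

lemma card_e_eq (m n : ℕ) (hmn : m ^ 2 ≤ n) :
    Nat.card {e : Fin m → ℕ // m ^ 2 + ∑ k : Fin m, (m - (k : ℕ)) * e k = n}
      = ((Finset.finsuppAntidiag (Finset.Icc 1 m) (n - m ^ 2)).filter
          (fun l : ℕ →₀ ℕ => ∀ j ∈ Finset.Icc 1 m, j ∣ l j)).card := by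
  set S := ((Finset.finsuppAntidiag (Finset.Icc 1 m) (n - m ^ 2)).filter
      (fun l : ℕ →₀ ℕ => ∀ j ∈ Finset.Icc 1 m, j ∣ l j)) with hS
  have hcard : Nat.card {l // l ∈ S} = S.card := Nat.card_eq_finsetCard S
  rw [← hcard]
  symm
  have hmap : ∀ l : {l // l ∈ S},
      m ^ 2 + ∑ k : Fin m, (m - (k : ℕ)) * (l.1 (m - (k : ℕ)) / (m - (k : ℕ))) = n := by
    rintro ⟨l, hl⟩
    rw [hS, Finset.mem_filter, Finset.mem_finsuppAntidiag] at hl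
    obtain ⟨⟨hsum, hsupp⟩, hdvd⟩ := hl
    have h1 : ∀ k : Fin m, (m - (k : ℕ)) * (l (m - (k : ℕ)) / (m - (k : ℕ)))
        = l (m - (k : ℕ)) := by
      intro k
      have hk : m - (k : ℕ) ∈ Finset.Icc 1 m := by
        rw [Finset.mem_Icc]; have := k.isLt; omega
      exact Nat.mul_div_cancel' (hdvd _ hk)
    rw [Finset.sum_congr rfl fun k _ => h1 k]
    have h2 : ∑ k : Fin m, l (m - (k : ℕ)) = ∑ k ∈ Finset.range m, l (m - k) :=
      Fin.sum_univ_eq_sum_range (fun k => l (m - k)) m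
    rw [h2, sum_reindex m (fun j => l j), hsum]
    omega
  refine Nat.card_eq_of_bijective
    (fun l : {l // l ∈ S} =>
      (⟨fun k => l.1 (m - (k : ℕ)) / (m - (k : ℕ)), hmap l⟩ :
        {e : Fin m → ℕ // m ^ 2 + ∑ k : Fin m, (m - (k : ℕ)) * e k = n})) ⟨?_, ?_⟩
  · -- injectivity
    rintro ⟨l, hl⟩ ⟨l', hl'⟩ h
    rw [hS, Finset.mem_filter, Finset.mem_finsuppAntidiag] at hl hl'
    apply Subtype.ext
    ext j
    by_cases hj : j ∈ Finset.Icc 1 m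
    · have hjm := Finset.mem_Icc.mp hj
      set k : Fin m := ⟨m - j, by omega⟩ with hk
      have hmk : m - (k : ℕ) = j := by simp [hk]; omega
      have := congrFun (congrArg (fun e => e.1) h) k
      simp only [hmk] at this
      have hd : j ∣ l j := hl.2 j hj
      have hd' : j ∣ l' j := hl'.2 j hj
      have e1 := Nat.mul_div_cancel' hd
      have e2 := Nat.mul_div_cancel' hd'
      calc l j = j * (l j / j) := e1.symm
        _ = j * (l' j / j) := by rw [this]
        _ = l' j := e2
    · have h1 : l j = 0 := by
        by_contra hc
        exact hj (hl.1.2 (Finsupp.mem_support_iff.mpr hc))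
      have h2 : l' j = 0 := by
        by_contra hc
        exact hj (hl'.1.2 (Finsupp.mem_support_iff.mpr hc))
      rw [h1, h2]
  · -- surjectivity
    rintro ⟨e, he⟩
    -- extend `e` to `ℕ`
    set eN : ℕ → ℕ := fun t => if h : t < m then e ⟨t, h⟩ else 0 with heN
    have heNe : ∀ k : Fin m, eN (k : ℕ) = e k := by
      intro k
      rw [heN]
      simp only [k.isLt, dif_pos]
    set l : ℕ →₀ ℕ := Finsupp.onFinset (Finset.Icc 1 m)
      (fun j => if 1 ≤ j ∧ j ≤ m then j * eN (m - j) else 0)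
      (by
        intro j hj
        rw [Finset.mem_Icc]
        by_contra hc
        exact hj (if_neg hc)) with hldef
    have hlapp : ∀ j, l j = if 1 ≤ j ∧ j ≤ m then j * eN (m - j) else 0 :=
      fun j => rfl
    have hsum2 : ∑ k : Fin m, (m - (k : ℕ)) * e k
        = ∑ k ∈ Finset.range m, (m - k) * eN k := by
      rw [← Fin.sum_univ_eq_sum_range (fun k => (m - k) * eN k) m]
      exact Finset.sum_congr rfl fun k _ => by rw [heNe]
    have hsum : ∑ j ∈ Finset.Icc 1 m, l j = n - m ^ 2 := by
      have h2 : ∑ j ∈ Finset.Icc 1 m, l j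
          = ∑ j ∈ Finset.Icc 1 m, j * eN (m - j) := by
        refine Finset.sum_congr rfl fun j hj => ?_
        have hjm := Finset.mem_Icc.mp hj
        rw [hlapp j, if_pos ⟨hjm.1, hjm.2⟩]
      have h3 : ∑ k ∈ Finset.range m, (m - k) * eN (m - (m - k))
          = ∑ j ∈ Finset.Icc 1 m, j * eN (m - j) :=
        sum_reindex m (fun j => j * eN (m - j))
      have h4 : ∑ k ∈ Finset.range m, (m - k) * eN (m - (m - k))
          = ∑ k ∈ Finset.range m, (m - k) * eN k := by
        refine Finset.sum_congr rfl fun k hk => ?_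
        have := Finset.mem_range.mp hk
        rw [show m - (m - k) = k by omega]
      rw [h2, ← h3, h4, ← hsum2]
      omega
    have hlmem : l ∈ S := by
      rw [hS, Finset.mem_filter, Finset.mem_finsuppAntidiag]
      refine ⟨⟨hsum, Finsupp.support_onFinset_subset⟩, ?_⟩
      intro j hj
      have hjm := Finset.mem_Icc.mp hj
      rw [hlapp j, if_pos ⟨hjm.1, hjm.2⟩]
      exact Dvd.intro _ rfl
    refine ⟨⟨l, hlmem⟩, ?_⟩
    apply Subtype.ext
    funext k
    show l (m - (k : ℕ)) / (m - (k : ℕ)) = e k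
    have hk := k.isLt
    rw [hlapp (m - (k : ℕ)),
      if_pos (show 1 ≤ m - (k : ℕ) ∧ m - (k : ℕ) ≤ m by omega)]
    rw [Nat.mul_div_cancel_left _ (show 0 < m - (k : ℕ) by omega)]
    rw [show m - (m - (k : ℕ)) = (k : ℕ) by omega]
    exact heNe k

end RRaux

/-- The number of partitions of `n` into parts pairwise differing by at
least 2 with exactly `m` parts is the coefficient of `z^m q^n` in
`∑_{N ≥ 0} q^{N²} z^N / (q;q)_N`; extracting the coefficient of `z^m`, this is the
coefficient of `q^n` in `q^{m²} / (q;q)_m`. -/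
theorem firstRogersRamanujan_refined (m n : ℕ) :
    (Nat.card {p : n.Partition // PairwiseGapTwo p ∧ Multiset.card p.parts = m} : ℚ)
      = PowerSeries.coeff n
          ((X : PowerSeries ℚ) ^ (m ^ 2)
            * (∏ j ∈ Finset.Icc 1 m, (1 - (X : PowerSeries ℚ) ^ j))⁻¹) := by
  have hcard1 :
      Nat.card {p : n.Partition // PairwiseGapTwo p ∧ Multiset.card p.parts = m}
        = Nat.card {e : Fin m → ℕ // m ^ 2 + ∑ k : Fin m, (m - (k : ℕ)) * e k = n} :=
    (Nat.card_eq_of_bijective _ (RRaux.toPart_bijective m n)).symm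
  rw [PowerSeries.coeff_X_pow_mul']
  by_cases h : m ^ 2 ≤ n
  · rw [if_pos h, RRaux.prod_inv_eq, RRaux.coeff_prod_gj, hcard1,
      RRaux.card_e_eq m n h]
  · rw [if_neg h, hcard1]
    have : IsEmpty {e : Fin m → ℕ // m ^ 2 + ∑ k : Fin m, (m - (k : ℕ)) * e k = n} := by
      constructor
      rintro ⟨e, he⟩
      exact h (he ▸ Nat.le_add_right _ _)
    rw [Nat.card_of_isEmpty]
    simp
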